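/- Let (U₁, U₂) be a type I pair: upper triangular matrices Uᵢ = [[αᵢ, βᵢ], [0, γᵢ]] with internal relations αᵢγᵢ = γᵢαᵢ = 1 and αᵢβᵢ = βᵢγᵢ, and mutual relations α₁α₂ = qα₂α₁, α₁β₂ = qβ₂γ₁, β₁γ₂ = qα₂β₁. Then for all integers n, m, writing U₁^n U₂^m = [[α(n,m), β(n,m)], [0, γ(n,m)]], one has α(n,m)γ(n,m) = γ(n,m)α(n,m) = q^{nm}·1. -/

import Mathlib

private lemma qcomm_aux {G : Type*} [Group G] {a b c : G}
    (hca : Commute c a) (hcb : Commute c b) (h : b * a = c * (a * b)) :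
    ∀ n m : ℤ, b ^ m * a ^ n = c ^ (n * m) * (a ^ n * b ^ m) := by
  intro n m
  have h1 : SemiconjBy b a (c * a) := by unfold SemiconjBy; rw [h, mul_assoc]
  have h2 : SemiconjBy b (a ^ n) ((c * a) ^ n) := h1.zpow_right n
  have h3 : (c * a) ^ n = c ^ n * a ^ n := hca.mul_zpow n
  have h4 : b * a ^ n = c ^ n * (a ^ n * b) := by
    have := h2.eq; rw [h3] at this; rw [this, mul_assoc]
  have h5 : SemiconjBy (a ^ n) b (c ^ (-n) * b) := by
    unfold SemiconjBy
    rw [mul_assoc, h4, ← mul_assoc, zpow_neg, inv_mul_cancel, one_mul]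
  have h6 : SemiconjBy (a ^ n) (b ^ m) ((c ^ (-n) * b) ^ m) := h5.zpow_right m
  have h7 : (c ^ (-n) * b) ^ m = c ^ (-n * m) * b ^ m := by
    rw [(hcb.zpow_left (-n)).mul_zpow m, ← zpow_mul]
  have h8 : a ^ n * b ^ m = c ^ (-n * m) * (b ^ m * a ^ n) := by
    have := h6.eq; rw [h7] at this; rw [this, mul_assoc]
  rw [h8, ← mul_assoc, ← zpow_add, neg_mul, add_neg_cancel, zpow_zero, one_mul]

private lemma tri_zpow {A : Type*} [Ring A] (a g : Aˣ) (b : A)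
    (W : (Matrix (Fin 2) (Fin 2) A)ˣ)
    (hW : W.val = !![(a : A), b; 0, (g : A)]) :
    ∀ n : ℤ, (W ^ n).val 1 0 = 0 ∧ (W ^ n).val 0 0 = ((a ^ n : Aˣ) : A) ∧
      (W ^ n).val 1 1 = ((g ^ n : Aˣ) : A) := by
  have hWinv : (W⁻¹ : (Matrix (Fin 2) (Fin 2) A)ˣ).val
      = !![((a⁻¹ : Aˣ) : A), -(((a⁻¹ : Aˣ) : A) * b * ((g⁻¹ : Aˣ) : A)); 0, ((g⁻¹ : Aˣ) : A)] := by
    have : W.val * !![((a⁻¹ : Aˣ) : A), -(((a⁻¹ : Aˣ) : A) * b * ((g⁻¹ : Aˣ) : A)); 0,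
        ((g⁻¹ : Aˣ) : A)] = 1 := by
      rw [hW]
      ext i j
      fin_cases i <;> fin_cases j <;>
        simp [Matrix.mul_apply, Fin.sum_univ_two, mul_neg, ← mul_assoc]
    exact Units.inv_eq_of_mul_eq_one_right this
  have w00 : W.val 0 0 = (a : A) := by rw [hW]; simp
  have w01 : W.val 0 1 = b := by rw [hW]; simp
  have w10 : W.val 1 0 = 0 := by rw [hW]; simp
  have w11 : W.val 1 1 = (g : A) := by rw [hW]; simp
  have v00 : (W⁻¹).val 0 0 = ((a⁻¹ : Aˣ) : A) := by rw [hWinv]; simp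
  have v10 : (W⁻¹).val 1 0 = 0 := by rw [hWinv]; simp
  have v11 : (W⁻¹).val 1 1 = ((g⁻¹ : Aˣ) : A) := by rw [hWinv]; simp
  intro n
  induction n using Int.induction_on with
  | zero => simp
  | succ n ih =>
      obtain ⟨i10, i00, i11⟩ := ih
      have key : (W ^ ((n : ℤ) + 1)).val = (W ^ (n : ℤ)).val * W.val := by
        rw [zpow_add_one, Units.val_mul]
      have e1 : ((a ^ ((n : ℤ) + 1) : Aˣ) : A) = ((a ^ (n : ℤ) : Aˣ) : A) * (a : A) := by
        rw [zpow_add_one, Units.val_mul]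
      have e2 : ((g ^ ((n : ℤ) + 1) : Aˣ) : A) = ((g ^ (n : ℤ) : Aˣ) : A) * (g : A) := by
        rw [zpow_add_one, Units.val_mul]
      refine ⟨?_, ?_, ?_⟩
      · rw [key, Matrix.mul_apply, Fin.sum_univ_two, w10, i10, mul_zero, zero_mul, add_zero]
      · rw [key, Matrix.mul_apply, Fin.sum_univ_two, w10, w00, i00, e1, mul_zero, add_zero]
      · rw [key, Matrix.mul_apply, Fin.sum_univ_two, w11, i10, i11, e2, zero_mul, zero_add]
  | pred n ih =>
      obtain ⟨i10, i00, i11⟩ := ih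
      have key : (W ^ ((-n : ℤ) - 1)).val = (W ^ (-n : ℤ)).val * (W⁻¹).val := by
        rw [zpow_sub_one, Units.val_mul]
      have e1 : ((a ^ ((-n : ℤ) - 1) : Aˣ) : A) = ((a ^ (-n : ℤ) : Aˣ) : A) * ((a⁻¹ : Aˣ) : A) := by
        rw [zpow_sub_one, Units.val_mul]
      have e2 : ((g ^ ((-n : ℤ) - 1) : Aˣ) : A) = ((g ^ (-n : ℤ) : Aˣ) : A) * ((g⁻¹ : Aˣ) : A) := by
        rw [zpow_sub_one, Units.val_mul]
      refine ⟨?_, ?_, ?_⟩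
      · rw [key, Matrix.mul_apply, Fin.sum_univ_two, v10, i10, mul_zero, zero_mul, add_zero]
      · rw [key, Matrix.mul_apply, Fin.sum_univ_two, v10, i00, v00, e1, mul_zero, add_zero]
      · rw [key, Matrix.mul_apply, Fin.sum_univ_two, v11, i10, i11, e2, zero_mul, zero_add]

/-- Type I pairs: the diagonal entries of `U₁ⁿ U₂ᵐ` commute and their product is
`q^{nm} · 1`. -/
theorem typeI_diagonal_relations {k A : Type*} [Field k] [CharZero k] [Ring A] [Algebra k A]
    (q : k) (hq0 : q ≠ 0) (hq1 : q ≠ 1)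
    (α₁ γ₁ α₂ γ₂ : Aˣ) (β₁ β₂ : A)
    -- internal relations (ID1)
    (hI1 : (α₁ : A) * (γ₁ : A) = 1) (hI1' : (γ₁ : A) * (α₁ : A) = 1)
    (hI2 : (α₂ : A) * (γ₂ : A) = 1) (hI2' : (γ₂ : A) * (α₂ : A) = 1)
    -- internal relations (IND1)
    (hB1 : (α₁ : A) * β₁ = β₁ * (γ₁ : A)) (hB2 : (α₂ : A) * β₂ = β₂ * (γ₂ : A))
    -- mutual relations (MD1) and (MND)
    (hAA : (α₁ : A) * (α₂ : A) = q • ((α₂ : A) * (α₁ : A)))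
    (hAB : (α₁ : A) * β₂ = q • (β₂ * (γ₁ : A)))
    (hBC : β₁ * (γ₂ : A) = q • ((α₂ : A) * β₁))
    (V₁ V₂ : (Matrix (Fin 2) (Fin 2) A)ˣ)
    (hV₁ : V₁.val = !![(α₁ : A), β₁; 0, (γ₁ : A)])
    (hV₂ : V₂.val = !![(α₂ : A), β₂; 0, (γ₂ : A)]) :
    ∀ n m : ℤ,
      (V₁ ^ n * V₂ ^ m).val 0 0 *
        (V₁ ^ n * V₂ ^ m).val 1 1
        = (V₁ ^ n * V₂ ^ m).val 1 1 *
          (V₁ ^ n * V₂ ^ m).val 0 0 ∧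
      (V₁ ^ n * V₂ ^ m).val 0 0 *
        (V₁ ^ n * V₂ ^ m).val 1 1
        = q ^ (n * m) • (1 : A) := by
  intro n m
  -- the central unit u = algebraMap q
  set f : k →* A := (algebraMap k A : k →+* A).toMonoidHom with hf
  set u : Aˣ := Units.map f (Units.mk0 q hq0) with hudef
  have hu : (u : A) = algebraMap k A q := rfl
  have hc : ∀ x : Aˣ, Commute u x := by
    intro x
    apply Units.ext
    show (u : A) * x = x * u
    rw [hu]
    exact (Algebra.commutes q (x : A))
  have hu_central : ∀ (x : Aˣ) (z : ℤ), u ^ z * x = x * u ^ z :=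
    fun x z => ((hc x).zpow_left z).eq
  -- derived mutual relations on the diagonal
  have h21 : (α₂ : A) * (γ₁ : A) = (u : A) * ((γ₁ : A) * (α₂ : A)) := by
    have h := congrArg (fun x => (γ₁ : A) * x * (γ₁ : A)) hAA
    rw [← mul_assoc, hI1', one_mul] at h
    rw [h, mul_smul_comm, smul_mul_assoc, Algebra.smul_def, ← hu, mul_assoc, mul_assoc, hI1,
      mul_one]
  have h12 : (γ₂ : A) * (α₁ : A) = (u : A) * ((α₁ : A) * (γ₂ : A)) := by
    have h := congrArg (fun x => (γ₂ : A) * x * (γ₂ : A)) hAA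
    rw [mul_assoc, mul_assoc, hI2, mul_one] at h
    rw [h, mul_smul_comm, smul_mul_assoc, Algebra.smul_def, ← hu,
      ← mul_assoc ((γ₂ : A)) ((α₂ : A)) ((α₁ : A)), hI2', one_mul]
  -- lift to units
  have hu21 : α₂ * γ₁ = u * (γ₁ * α₂) := by
    apply Units.ext; simpa using h21
  have hu12 : γ₂ * α₁ = u * (α₁ * γ₂) := by
    apply Units.ext; simpa using h12
  -- q-commutation for zpow
  have key21 := qcomm_aux (hc γ₁) (hc α₂) hu21 n m
  have key12 := qcomm_aux (hc α₁) (hc γ₂) hu12 n m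
  -- inverse relations as units
  have hg1 : γ₁ = α₁⁻¹ := eq_inv_of_mul_eq_one_left (Units.ext hI1')
  have hg2 : γ₂ = α₂⁻¹ := eq_inv_of_mul_eq_one_left (Units.ext hI2')
  have h11 : α₁ ^ n * γ₁ ^ n = 1 := by rw [hg1, inv_zpow]; simp
  have h22 : α₂ ^ m * γ₂ ^ m = 1 := by rw [hg2, inv_zpow]; simp
  have h11' : γ₁ ^ n * α₁ ^ n = 1 := by rw [hg1, inv_zpow]; simp
  have h22' : γ₂ ^ m * α₂ ^ m = 1 := by rw [hg2, inv_zpow]; simp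
  -- key unit identities
  have keyA : (α₁ ^ n * α₂ ^ m) * (γ₁ ^ n * γ₂ ^ m) = u ^ (n * m) := by
    calc (α₁ ^ n * α₂ ^ m) * (γ₁ ^ n * γ₂ ^ m)
        = α₁ ^ n * (α₂ ^ m * γ₁ ^ n) * γ₂ ^ m := by simp [mul_assoc]
      _ = α₁ ^ n * (u ^ (n * m) * (γ₁ ^ n * α₂ ^ m)) * γ₂ ^ m := by rw [key21]
      _ = (α₁ ^ n * u ^ (n * m)) * ((γ₁ ^ n * α₂ ^ m) * γ₂ ^ m) := by simp [mul_assoc]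
      _ = (u ^ (n * m) * α₁ ^ n) * ((γ₁ ^ n * α₂ ^ m) * γ₂ ^ m) := by rw [hu_central]
      _ = u ^ (n * m) * ((α₁ ^ n * γ₁ ^ n) * (α₂ ^ m * γ₂ ^ m)) := by simp [mul_assoc]
      _ = u ^ (n * m) := by rw [h11, h22]; simp
  have keyB : (γ₁ ^ n * γ₂ ^ m) * (α₁ ^ n * α₂ ^ m) = u ^ (n * m) := by
    calc (γ₁ ^ n * γ₂ ^ m) * (α₁ ^ n * α₂ ^ m)
        = γ₁ ^ n * (γ₂ ^ m * α₁ ^ n) * α₂ ^ m := by simp [mul_assoc]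
      _ = γ₁ ^ n * (u ^ (n * m) * (α₁ ^ n * γ₂ ^ m)) * α₂ ^ m := by rw [key12]
      _ = (γ₁ ^ n * u ^ (n * m)) * ((α₁ ^ n * γ₂ ^ m) * α₂ ^ m) := by simp [mul_assoc]
      _ = (u ^ (n * m) * γ₁ ^ n) * ((α₁ ^ n * γ₂ ^ m) * α₂ ^ m) := by rw [hu_central]
      _ = u ^ (n * m) * ((γ₁ ^ n * α₁ ^ n) * (γ₂ ^ m * α₂ ^ m)) := by simp [mul_assoc]
      _ = u ^ (n * m) := by rw [h11', h22']; simp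
  -- matrix entries
  obtain ⟨p10, p00, p11⟩ := tri_zpow α₁ γ₁ β₁ V₁ hV₁ n
  obtain ⟨r10, r00, r11⟩ := tri_zpow α₂ γ₂ β₂ V₂ hV₂ m
  have E00 : (V₁ ^ n * V₂ ^ m).val 0 0 = ((α₁ ^ n * α₂ ^ m : Aˣ) : A) := by
    rw [Units.val_mul, Matrix.mul_apply, Fin.sum_univ_two, p00, r10, r00, mul_zero, add_zero,
      Units.val_mul]
  have E11 : (V₁ ^ n * V₂ ^ m).val 1 1 = ((γ₁ ^ n * γ₂ ^ m : Aˣ) : A) := by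
    rw [Units.val_mul, Matrix.mul_apply, Fin.sum_univ_two, p10, p11, r11, zero_mul, zero_add,
      Units.val_mul]
  -- value of u ^ (n*m)
  have huval : ((u ^ (n * m) : Aˣ) : A) = q ^ (n * m) • (1 : A) := by
    rw [hudef, ← map_zpow, Units.coe_map]
    show f ((Units.mk0 q hq0 ^ (n * m) : kˣ) : k) = _
    rw [Units.val_zpow_eq_zpow_val]
    show algebraMap k A ((Units.mk0 q hq0 : k) ^ (n * m)) = _
    rw [Units.val_mk0, Algebra.algebraMap_eq_smul_one]
  constructor
  · rw [E00, E11, ← Units.val_mul, ← Units.val_mul, keyA, keyB]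
  · rw [E00, E11, ← Units.val_mul, keyA, huval]
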